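/- arXiv:math/9907119 — 2 statements merged into one kernel-verified Lean document; each statement's English description precedes it below -/
import Mathlib

section
/- The Cartesian product K_m □ K_n of two complete graphs is circulant if and only if gcd(m,n) = 1 or m = n = 2. -/
open SimpleGraph

/-- A graph is circulant iff its automorphism group contains a transitive cyclic subgroup,
i.e. some automorphism whose iterates act transitively on the vertices. -/
def SimpleGraph.IsCirculant {V : Type*} (G : SimpleGraph V) : Prop :=
  ∃ φ : G ≃g G, ∀ v w : V, ∃ k : ℕ, (φ.toEquiv ^ k) v = w

/-- The tensor (categorical/Kronecker) product of simple graphs. -/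
def SimpleGraph.tensor {α β : Type*} (G : SimpleGraph α) (H : SimpleGraph β) :
    SimpleGraph (α × β) where
  Adj x y := G.Adj x.1 y.1 ∧ H.Adj x.2 y.2
  symm.symm _ _ h := ⟨G.symm.symm _ _ h.1, H.symm.symm _ _ h.2⟩
  loopless.irrefl x h := G.loopless.irrefl x.1 h.1

open Function
open Fin.NatCast Fin.CommRing

section Aux

lemma Rook.mem_periodicPts_of_injective {α : Type*} [Finite α] {f : α → α}
    (hf : Function.Injective f) (x : α) : x ∈ periodicPts f := by
  obtain ⟨i, j, hij, h⟩ := Finite.exists_ne_map_eq_of_infinite (fun k : ℕ => f^[k] x)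
  wlog hlt : i < j generalizing i j
  · exact this j i hij.symm h.symm (by omega)
  have : f^[i] (f^[j - i] x) = f^[i] x := by
    rw [← Function.iterate_add_apply]; rw [show i + (j - i) = j by omega]; exact h.symm
  exact mem_periodicPts.2 ⟨j - i, by omega, (hf.iterate i) this⟩

lemma Rook.minimalPeriod_le_card {α : Type*} [Fintype α] {f : α → α} {x : α} :
    minimalPeriod f x ≤ Fintype.card α := by
  classical
  have hinj : Function.Injective (fun i : Fin (minimalPeriod f x) => f^[i.1] x) :=
    fun i j h => Fin.ext (iterate_injOn_Iio_minimalPeriod (by exact i.2) (by exact j.2) h)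
  simpa using Fintype.card_le_of_injective _ hinj

lemma Rook.card_le_of_periodic_surj {α : Type*} [Fintype α] (g : ℕ → α) (L : ℕ)
    (hper : ∀ k, g (k + L) = g k) (hsurj : ∀ w, ∃ k, g k = w) (hL : 0 < L) :
    Fintype.card α ≤ L := by
  have key : ∀ k, g k = g (k % L) := by
    intro k
    induction k using Nat.strong_induction_on with
    | _ k ih =>
      rcases lt_or_ge k L with h | h
      · rw [Nat.mod_eq_of_lt h]
      · have h2 : k - L + L = k := by omega
        rw [← h2, hper, ih _ (by omega), Nat.add_mod_right]
  have hsurj2 : Function.Surjective (fun i : Fin L => g i.1) := by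
    intro w
    obtain ⟨k, hk⟩ := hsurj w
    exact ⟨⟨k % L, Nat.mod_lt _ hL⟩, by simpa using (key k).symm.trans hk⟩
  simpa using Fintype.card_le_of_surjective _ hsurj2

lemma Rook.minimalPeriod_semiconj {A B : Type*} {c : A → B} (hc : Function.Injective c)
    {g : A → A} {h : B → B} (hs : Function.Semiconj c g h) (x : A) :
    minimalPeriod h (c x) = minimalPeriod g x := by
  rw [minimalPeriod_eq_minimalPeriod_iff]
  intro t
  unfold IsPeriodicPt IsFixedPt
  rw [← (hs.iterate_right t).eq x]
  exact ⟨fun hh => hc hh, fun hh => congrArg c hh⟩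

lemma Rook.coprime_of_coordwise {m n : ℕ}
    (σ : Fin m → Fin m) (τ : Fin n → Fin n) (hσ : Function.Injective σ)
    (hτ : Function.Injective τ) (x0 : Fin m) (y0 : Fin n)
    (hcover : ∀ w : Fin m × Fin n, ∃ k, (σ^[k] x0, τ^[k] y0) = w) :
    Nat.Coprime m n := by
  set p := minimalPeriod σ x0 with hpdef
  set q := minimalPeriod τ y0 with hqdef
  have hpmem := Rook.mem_periodicPts_of_injective hσ x0
  have hqmem := Rook.mem_periodicPts_of_injective hτ y0
  have hp : 0 < p := minimalPeriod_pos_of_mem_periodicPts hpmem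
  have hq : 0 < q := minimalPeriod_pos_of_mem_periodicPts hqmem
  have hpm : p ≤ m := by simpa using Rook.minimalPeriod_le_card (f := σ) (x := x0)
  have hqn : q ≤ n := by simpa using Rook.minimalPeriod_le_card (f := τ) (x := y0)
  set L := Nat.lcm p q with hLdef
  have hL : 0 < L := Nat.lcm_pos hp hq
  have hperσ : σ^[L] x0 = x0 :=
    ((isPeriodicPt_minimalPeriod σ x0).trans_dvd (Nat.dvd_lcm_left p q))
  have hperτ : τ^[L] y0 = y0 :=
    ((isPeriodicPt_minimalPeriod τ y0).trans_dvd (Nat.dvd_lcm_right p q))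
  have hcard : m * n ≤ L := by
    have := Rook.card_le_of_periodic_surj (fun k => (σ^[k] x0, τ^[k] y0)) L
      (fun k => by simp only [Function.iterate_add_apply, hperσ, hperτ])
      hcover hL
    simpa using this
  have hLpq : L ≤ p * q :=
    Nat.le_of_dvd (Nat.mul_pos hp hq) (Nat.lcm_dvd ⟨q, rfl⟩ ⟨p, mul_comm p q⟩)
  have hpq : p * q ≤ m * n := Nat.mul_le_mul hpm hqn
  have hpqeq : p * q = m * n := le_antisymm hpq (hcard.trans hLpq)
  have hpeq : p = m := by nlinarith
  have hqeq : q = n := by nlinarith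
  have hLeq : L = p * q := le_antisymm hLpq (by omega)
  have hgcd : Nat.gcd p q = 1 := by
    have hpq0 : 0 < p * q := Nat.mul_pos hp hq
    nlinarith [Nat.gcd_mul_lcm p q]
  rw [← hpeq, ← hqeq]
  exact hgcd

lemma Rook.swap_case {m : ℕ} (hm : 2 ≤ m) (α β : Fin m → Fin m)
    (hα : Function.Injective α) (hβ : Function.Injective β)
    (x0 y0 a1 b1 : Fin m)
    (hq1 : minimalPeriod α a1 = minimalPeriod β y0)
    (hp1 : minimalPeriod β b1 = minimalPeriod α x0)
    (hcover : ∀ w : Fin m × Fin m,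
      (∃ j, (α^[j] x0, β^[j] y0) = w) ∨ (∃ j, (α^[j] a1, β^[j] b1) = w)) :
    m = 2 := by
  classical
  set p := minimalPeriod α x0 with hpdef
  set q := minimalPeriod β y0 with hqdef
  have hx0mem := Rook.mem_periodicPts_of_injective hα x0
  have hy0mem := Rook.mem_periodicPts_of_injective hβ y0
  have hp : 0 < p := minimalPeriod_pos_of_mem_periodicPts hx0mem
  have hq : 0 < q := minimalPeriod_pos_of_mem_periodicPts hy0mem
  have hpm : p ≤ m := by simpa using Rook.minimalPeriod_le_card (f := α) (x := x0)
  have hqm : q ≤ m := by simpa using Rook.minimalPeriod_le_card (f := β) (x := y0)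
  set L := Nat.lcm p q with hLdef
  have hL : 0 < L := Nat.lcm_pos hp hq
  have hperiter : ∀ (f : Fin m → Fin m) (z : Fin m), minimalPeriod f z ∣ L → f^[L] z = z :=
    fun f z hd => (isPeriodicPt_minimalPeriod f z).trans_dvd hd
  have hαx0 : α^[L] x0 = x0 := hperiter α x0 (Nat.dvd_lcm_left p q)
  have hβy0 : β^[L] y0 = y0 := hperiter β y0 (Nat.dvd_lcm_right p q)
  have hαa1 : α^[L] a1 = a1 := hperiter α a1 (hq1 ▸ Nat.dvd_lcm_right p q)
  have hβb1 : β^[L] b1 = b1 := hperiter β b1 (hp1 ▸ Nat.dvd_lcm_left p q)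
  have hcard : m * m ≤ 2 * L := by
    have := Rook.card_le_of_periodic_surj
      (fun k => if k % 2 = 0 then (α^[k/2] x0, β^[k/2] y0) else (α^[k/2] a1, β^[k/2] b1))
      (2 * L)
      (fun k => by
        have h1 : (k + 2 * L) % 2 = k % 2 := by omega
        have h2 : (k + 2 * L) / 2 = k / 2 + L := by omega
        simp only [h1, h2, Function.iterate_add_apply, hαx0, hβy0, hαa1, hβb1])
      (fun w => by
        rcases hcover w with ⟨j, hj⟩ | ⟨j, hj⟩
        · exact ⟨2 * j, by simpa [Nat.mul_div_cancel_left] using hj⟩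
        · refine ⟨2 * j + 1, ?_⟩
          have : (2 * j + 1) % 2 = 1 := by omega
          have h2 : (2 * j + 1) / 2 = j := by omega
          simp [this, h2, hj])
      (by omega)
    simpa using this
  have hLpq : L ≤ p * q :=
    Nat.le_of_dvd (Nat.mul_pos hp hq) (Nat.lcm_dvd ⟨q, rfl⟩ ⟨p, mul_comm p q⟩)
  by_cases hA : ∃ j, α^[j] x0 = a1
  · obtain ⟨j, hj⟩ := hA
    have hqp : q = p := by
      rw [← hq1, ← hj, minimalPeriod_apply_iterate hx0mem]
    have hLp : L = p := by rw [hLdef, hqp, Nat.lcm_self]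
    have : m * m ≤ 2 * m := by
      calc m * m ≤ 2 * L := hcard
        _ = 2 * p := by rw [hLp]
        _ ≤ 2 * m := by omega
    nlinarith
  · exfalso
    push_neg at hA
    have hq1' : minimalPeriod α a1 = q := hq1
    set O : Finset (Fin m) := (Finset.range p).image (fun j => α^[j] x0) with hO
    set O1 : Finset (Fin m) := (Finset.range q).image (fun j => α^[j] a1) with hO1
    have hcardO : O.card = p := by
      rw [hO, Finset.card_image_of_injOn, Finset.card_range]
      intro i hi j hj hij
      exact iterate_injOn_Iio_minimalPeriod (by simpa using hi) (by simpa using hj) hij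
    have hcardO1 : O1.card = q := by
      rw [hO1, Finset.card_image_of_injOn, Finset.card_range]
      intro i hi j hj hij
      have hi' : i ∈ Set.Iio (minimalPeriod α a1) := by rw [hq1']; simpa using hi
      have hj' : j ∈ Set.Iio (minimalPeriod α a1) := by rw [hq1']; simpa using hj
      exact iterate_injOn_Iio_minimalPeriod hi' hj' hij
    have hdisj : Disjoint O O1 := by
      rw [Finset.disjoint_left]
      rintro z hz hz1
      rw [hO, Finset.mem_image] at hz
      rw [hO1, Finset.mem_image] at hz1
      obtain ⟨i, hi, hzi⟩ := hz
      obtain ⟨j, hj, hzj⟩ := hz1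
      simp only [Finset.mem_range] at hi hj
      apply hA ((q - j) + i)
      have hper : α^[q] a1 = a1 := by
        have := isPeriodicPt_minimalPeriod α a1
        rwa [hq1'] at this
      calc α^[q - j + i] x0 = α^[q - j] (α^[i] x0) := Function.iterate_add_apply _ _ _ _
        _ = α^[q - j] (α^[j] a1) := by rw [hzi, hzj]
        _ = α^[q - j + j] a1 := (Function.iterate_add_apply _ _ _ _).symm
        _ = a1 := by rw [show q - j + j = q by omega, hper]
    have hsum : p + q ≤ m := by
      have := Finset.card_le_univ (O ∪ O1)
      rw [Finset.card_union_of_disjoint hdisj, hcardO, hcardO1] at this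
      simpa using this
    have h2 : (p + q) * (p + q) ≤ m * m := Nat.mul_le_mul hsum hsum
    nlinarith

section Structure
variable {m n : ℕ}

def Rook.RowR (f : Fin m × Fin n → Fin m × Fin n) (a : Fin m) : Prop :=
  ∀ y y' : Fin n, (f (a,y)).1 = (f (a,y')).1
def Rook.RowC (f : Fin m × Fin n → Fin m × Fin n) (a : Fin m) : Prop :=
  ∀ y y' : Fin n, (f (a,y)).2 = (f (a,y')).2
def Rook.ColR (f : Fin m × Fin n → Fin m × Fin n) (b : Fin n) : Prop :=
  ∀ x x' : Fin m, (f (x,b)).1 = (f (x',b)).1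
def Rook.ColC (f : Fin m × Fin n → Fin m × Fin n) (b : Fin n) : Prop :=
  ∀ x x' : Fin m, (f (x,b)).2 = (f (x',b)).2

def Rook.PAdj (u v : Fin m × Fin n) : Prop :=
  (u.1 ≠ v.1 ∧ u.2 = v.2) ∨ (u.2 ≠ v.2 ∧ u.1 = v.1)

end Structure

lemma Rook.line_dichotomy {k m n : ℕ} (g : Fin k → Fin m × Fin n)
    (hinj : Function.Injective g)
    (hadj : ∀ i j, i ≠ j →
      ((g i).1 ≠ (g j).1 ∧ (g i).2 = (g j).2) ∨ ((g i).2 ≠ (g j).2 ∧ (g i).1 = (g j).1)) :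
    (∀ i j, (g i).1 = (g j).1) ∨ (∀ i j, (g i).2 = (g j).2) := by
  by_cases hc : ∃ i j, i ≠ j ∧ (g i).1 = (g j).1
  · left
    obtain ⟨i0, j0, hne, h1⟩ := hc
    have key : ∀ i, (g i).1 = (g i0).1 := by
      intro i
      by_contra hni
      have hi0 : i ≠ i0 := fun h => hni (h ▸ rfl)
      have hij0 : i ≠ j0 := by rintro rfl; exact hni h1.symm
      have e1 : (g i).2 = (g i0).2 := by
        rcases hadj i i0 hi0 with ⟨_, h⟩ | ⟨_, h⟩
        · exact h
        · exact absurd h hni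
      have e2 : (g i).2 = (g j0).2 := by
        rcases hadj i j0 hij0 with ⟨_, h⟩ | ⟨_, h⟩
        · exact h
        · exact absurd (h.trans h1.symm) hni
      exact hne (hinj (Prod.ext h1 (e1.symm.trans e2)))
    intro i j; rw [key i, key j]
  · right
    push_neg at hc
    intro i j
    rcases eq_or_ne i j with rfl | hne
    · rfl
    rcases hadj i j hne with ⟨_, h⟩ | ⟨h, h2⟩
    · exact h
    · exact absurd (hc i j hne) (not_not.2 h2)

lemma Rook.mixed_aux {m n : ℕ} (f : Fin m × Fin n → Fin m × Fin n)
    (hinj : Function.Injective f)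
    (hcol : ∀ b : Fin n, Rook.ColR f b ∨ Rook.ColC f b)
    (a a' : Fin m) (hRR : Rook.RowR f a) (hRC : Rook.RowC f a') : n ≤ 2 := by
  by_contra hn3
  push_neg at hn3
  have hCR : ∀ b b' : Fin n, Rook.ColR f b → Rook.ColR f b' → b = b' := by
    intro b b' hb hb'
    have h1 : (f (a',b)).1 = (f (a',b')).1 :=
      (hb a' a).trans ((hRR b b').trans (hb' a a'))
    have h2 : (f (a',b)).2 = (f (a',b')).2 := hRC b b'
    exact ((Prod.mk.injEq _ _ _ _).mp (hinj (Prod.ext h1 h2))).2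
  have hCC : ∀ b b' : Fin n, Rook.ColC f b → Rook.ColC f b' → b = b' := by
    intro b b' hb hb'
    have h2 : (f (a,b)).2 = (f (a,b')).2 :=
      (hb a a').trans ((hRC b b').trans (hb' a' a))
    have h1 : (f (a,b)).1 = (f (a,b')).1 := hRR b b'
    exact ((Prod.mk.injEq _ _ _ _).mp (hinj (Prod.ext h1 h2))).2
  set b0 : Fin n := ⟨0, by omega⟩
  set b1 : Fin n := ⟨1, by omega⟩
  set b2 : Fin n := ⟨2, by omega⟩
  have e01 : b0 ≠ b1 := by simp [b0, b1]
  have e02 : b0 ≠ b2 := by simp [b0, b2]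
  have e12 : b1 ≠ b2 := by simp [b1, b2]
  rcases hcol b0 with h0 | h0 <;> rcases hcol b1 with h1 | h1 <;> rcases hcol b2 with h2 | h2
  · exact e01 (hCR _ _ h0 h1)
  · exact e01 (hCR _ _ h0 h1)
  · exact e02 (hCR _ _ h0 h2)
  · exact e12 (hCC _ _ h1 h2)
  · exact e12 (hCR _ _ h1 h2)
  · exact e02 (hCC _ _ h0 h2)
  · exact e01 (hCC _ _ h0 h1)
  · exact e01 (hCC _ _ h0 h1)

lemma Rook.structure_lemma {m n : ℕ} (hm : 2 ≤ m) (hn : 2 ≤ n)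
    (f : Fin m × Fin n → Fin m × Fin n) (hinj : Function.Injective f)
    (hpres : ∀ u v, Rook.PAdj u v → Rook.PAdj (f u) (f v)) :
    (∃ (σ : Fin m → Fin m) (τ : Fin n → Fin n), ∀ p, f p = (σ p.1, τ p.2)) ∨
    (∃ (c : Fin n → Fin m) (s : Fin m → Fin n), ∀ p, f p = (c p.2, s p.1)) ∨
    (m = 2 ∧ n = 2) := by
  have a0 : Fin m := ⟨0, by omega⟩
  have b0 : Fin n := ⟨0, by omega⟩
  have hrow : ∀ a, Rook.RowR f a ∨ Rook.RowC f a := by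
    intro a
    apply Rook.line_dichotomy (fun y => f (a, y))
      (fun y y' h => by simpa using hinj h)
    intro i j hij
    exact hpres (a,i) (a,j) (Or.inr ⟨hij, rfl⟩)
  have hcol : ∀ b, Rook.ColR f b ∨ Rook.ColC f b := by
    intro b
    exact Rook.line_dichotomy (fun x => f (x, b))
      (fun x x' h => by simpa using hinj h)
      (fun i j hij => hpres (i,b) (j,b) (Or.inl ⟨hij, rfl⟩))
  have cardmn : Fintype.card (Fin m × Fin n) = m * n := by simp
  have no_fst_const : ¬ (∀ p q : Fin m × Fin n, (f p).1 = (f q).1) := by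
    intro hconst
    have hsndinj : Function.Injective (fun p => (f p).2) := by
      intro p q h
      exact hinj (Prod.ext (hconst p q) h)
    have := Fintype.card_le_of_injective _ hsndinj
    simp only [cardmn, Fintype.card_fin] at this
    nlinarith
  have no_snd_const : ¬ (∀ p q : Fin m × Fin n, (f p).2 = (f q).2) := by
    intro hconst
    have hfstinj : Function.Injective (fun p => (f p).1) := by
      intro p q h
      exact hinj (Prod.ext h (hconst p q))
    have := Fintype.card_le_of_injective _ hfstinj
    simp only [cardmn, Fintype.card_fin] at this
    nlinarith
  by_cases hallRR : ∀ a, Rook.RowR f a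
  · have hallCC : ∀ b, Rook.ColC f b := by
      intro b
      rcases hcol b with hb | hb
      · exfalso
        apply no_fst_const
        intro p q
        calc (f p).1 = (f (p.1, b)).1 := hallRR p.1 p.2 b
          _ = (f (q.1, b)).1 := hb p.1 q.1
          _ = (f q).1 := (hallRR q.1 q.2 b).symm
      · exact hb
    left
    refine ⟨fun a => (f (a, b0)).1, fun b => (f (a0, b)).2, fun p => ?_⟩
    exact Prod.ext (hallRR p.1 p.2 b0) (hallCC p.2 p.1 a0)
  · push_neg at hallRR
    obtain ⟨a1, ha1⟩ := hallRR
    have ha1C : Rook.RowC f a1 := (hrow a1).resolve_left ha1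
    by_cases hallRC : ∀ a, Rook.RowC f a
    · have hallCR : ∀ b, Rook.ColR f b := by
        intro b
        rcases hcol b with hb | hb
        · exact hb
        · exfalso
          apply no_snd_const
          intro p q
          calc (f p).2 = (f (p.1, b)).2 := hallRC p.1 p.2 b
            _ = (f (q.1, b)).2 := hb p.1 q.1
            _ = (f q).2 := (hallRC q.1 q.2 b).symm
      right; left
      refine ⟨fun b => (f (a0, b)).1, fun a => (f (a, b0)).2, fun p => ?_⟩
      exact Prod.ext (hallCR p.2 p.1 a0) (hallRC p.1 p.2 b0)
    · push_neg at hallRC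
      obtain ⟨a2, ha2⟩ := hallRC
      have ha2R : Rook.RowR f a2 := (hrow a2).resolve_right ha2
      have hn2 : n ≤ 2 := Rook.mixed_aux f hinj hcol a2 a1 ha2R ha1C
      have hexCR : ∃ b, Rook.ColR f b := by
        by_contra hno
        push_neg at hno
        apply no_snd_const
        intro p q
        have hCC : ∀ b, Rook.ColC f b := fun b => (hcol b).resolve_left (hno b)
        calc (f p).2 = (f (a1, p.2)).2 := hCC p.2 p.1 a1
          _ = (f (a1, q.2)).2 := ha1C p.2 q.2
          _ = (f q).2 := (hCC q.2 a1 q.1)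
      have hexCC : ∃ b, Rook.ColC f b := by
        by_contra hno
        push_neg at hno
        apply no_fst_const
        intro p q
        have hCR : ∀ b, Rook.ColR f b := fun b => (hcol b).resolve_right (hno b)
        calc (f p).1 = (f (a2, p.2)).1 := hCR p.2 p.1 a2
          _ = (f (a2, q.2)).1 := ha2R p.2 q.2
          _ = (f q).1 := (hCR q.2 a2 q.1)
      obtain ⟨bR, hbR⟩ := hexCR
      obtain ⟨bC, hbC⟩ := hexCC
      have hm2 : m ≤ 2 := by
        exact Rook.mixed_aux (m := n) (n := m)
          (fun p => Prod.swap (f (Prod.swap p)))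
          (fun p q h => by
            have := hinj (Prod.swap_injective h)
            simpa using congrArg Prod.swap this)
          (fun b => by
            rcases hrow b with hb | hb
            · right; exact fun x x' => hb x x'
            · left; exact fun x x' => hb x x')
          bC bR
          (fun x x' => hbC x x')
          (fun x x' => hbR x x')
      exact Or.inr (Or.inr ⟨by omega, by omega⟩)

lemma Rook.fin_cast_modeq {m : ℕ} [NeZero m] {a b : ℕ} (h : a ≡ b [MOD m]) :
    (a : Fin m) = (b : Fin m) := by
  apply Fin.ext
  rw [Fin.val_natCast, Fin.val_natCast]
  exact h

lemma Rook.circulant_of_coprime {m n : ℕ} (hm : 1 ≤ m) (hn : 1 ≤ n) (h : Nat.Coprime m n) :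
    ((completeGraph (Fin m)) □ (completeGraph (Fin n))).IsCirculant := by
  haveI : NeZero m := ⟨by omega⟩
  haveI : NeZero n := ⟨by omega⟩
  refine ⟨⟨(Equiv.addRight (1 : Fin m)).prodCongr (Equiv.addRight (1 : Fin n)), ?_⟩, ?_⟩
  · intro a b
    simp [boxProd_adj]
  · intro v w
    set e := ((Equiv.addRight (1 : Fin m)).prodCongr (Equiv.addRight (1 : Fin n)))
    have hpow : ∀ (k : ℕ) (p : Fin m × Fin n),
        (e ^ k) p = (p.1 + (k : Fin m), p.2 + (k : Fin n)) := by
      intro k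
      induction k with
      | zero => intro p; simp
      | succ k ih =>
        intro p
        rw [pow_succ, Equiv.Perm.mul_apply, ih]
        simp only [e, Equiv.prodCongr_apply, Equiv.coe_addRight, Prod.map]
        push_cast
        exact Prod.ext (by ring) (by ring)
    obtain ⟨k, hk1, hk2⟩ := Nat.chineseRemainder h (w.1 - v.1).val (w.2 - v.2).val
    refine ⟨k, ?_⟩
    have h1 : (k : Fin m) = w.1 - v.1 := by
      rw [Rook.fin_cast_modeq hk1, Fin.cast_val_eq_self]
    have h2 : (k : Fin n) = w.2 - v.2 := by
      rw [Rook.fin_cast_modeq hk2, Fin.cast_val_eq_self]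
    show (e ^ k) v = w
    rw [hpow, h1, h2]
    exact Prod.ext (by simp) (by simp)

def Rook.e22 : (Fin 2 × Fin 2) ≃ (Fin 2 × Fin 2) where
  toFun p := (p.2, p.1 + 1)
  invFun p := (p.2 + 1, p.1)
  left_inv p := by fin_cases p <;> decide
  right_inv p := by fin_cases p <;> decide

lemma Rook.circulant_22 : ((completeGraph (Fin 2)) □ (completeGraph (Fin 2))).IsCirculant := by
  refine ⟨⟨Rook.e22, ?_⟩, ?_⟩
  · intro a b
    simp only [boxProd_adj, completeGraph_eq_top, top_adj, Rook.e22, Equiv.coe_fn_mk]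
    fin_cases a <;> fin_cases b <;> decide
  · intro v w
    have key : ∀ v w : Fin 2 × Fin 2, ∃ k : Fin 4, (Rook.e22 ^ (k : ℕ)) v = w := by decide
    obtain ⟨k, hk⟩ := key v w
    exact ⟨k, hk⟩

end Aux

theorem stmt_10 (m n : ℕ) (hm : 1 ≤ m) (hn : 1 ≤ n) :
    ((completeGraph (Fin m)) □ (completeGraph (Fin n))).IsCirculant ↔
      Nat.Coprime m n ∨ (m = 2 ∧ n = 2) := by
  constructor
  · rintro ⟨φ, hφ⟩
    rcases eq_or_lt_of_le hm with hm1 | hm2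
    · left; rw [← hm1]; exact Nat.coprime_one_left n
    rcases eq_or_lt_of_le hn with hn1 | hn2
    · left; rw [← hn1]; exact Nat.coprime_one_right m
    set f : Fin m × Fin n → Fin m × Fin n := fun p => φ.toEquiv p with hf
    have hφ' : ∀ v w : Fin m × Fin n, ∃ k : ℕ, f^[k] v = w := by
      intro v w
      obtain ⟨k, hk⟩ := hφ v w
      refine ⟨k, ?_⟩
      have h2 : f^[k] v = (φ.toEquiv ^ k) v :=
        (congrFun (Equiv.Perm.coe_pow φ.toEquiv k) v).symm
      exact h2.trans hk
    clear hφ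
    have hinj : Function.Injective f := φ.toEquiv.injective
    have hadj : ∀ u v : Fin m × Fin n,
        ((completeGraph (Fin m)) □ (completeGraph (Fin n))).Adj u v ↔ Rook.PAdj u v := by
      intro u v
      simp [boxProd_adj, Rook.PAdj]
    have hpres : ∀ u v, Rook.PAdj u v → Rook.PAdj (f u) (f v) := by
      intro u v h
      rw [← hadj] at h ⊢
      exact φ.map_adj_iff.mpr h
    rcases Rook.structure_lemma hm2 hn2 f hinj hpres with ⟨σ, τ, hst⟩ | ⟨c, s, hcs⟩ | h22
    · left
      set x0 : Fin m := ⟨0, by omega⟩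
      set y0 : Fin n := ⟨0, by omega⟩
      have hσ : Function.Injective σ := by
        intro a a' h
        have h2 : f (a, y0) = f (a', y0) := by rw [hst, hst]; simp [h]
        exact congrArg Prod.fst (hinj h2)
      have hτ : Function.Injective τ := by
        intro b b' h
        have h2 : f (x0, b) = f (x0, b') := by rw [hst, hst]; simp [h]
        exact congrArg Prod.snd (hinj h2)
      have hiter : ∀ (k : ℕ) (p : Fin m × Fin n), f^[k] p = (σ^[k] p.1, τ^[k] p.2) := by
        intro k
        induction k with
        | zero => intro p; simp
        | succ k ih =>
          intro p
          rw [Function.iterate_succ_apply', ih, hst]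
          simp [Function.iterate_succ_apply']
      apply Rook.coprime_of_coordwise σ τ hσ hτ x0 y0
      intro w
      obtain ⟨k, hk⟩ := hφ' (x0, y0) w
      refine ⟨k, ?_⟩
      rw [← hk, hiter]
    · -- swap case
      have hc : Function.Injective c := by
        intro b b' h
        have h2 : f (⟨0, by omega⟩, b) = f ((⟨0, by omega⟩ : Fin m), b') := by
          rw [hcs, hcs]; simp [h]
        exact congrArg Prod.snd (hinj h2)
      have hs : Function.Injective s := by
        intro a a' h
        have h2 : f (a, ⟨0, by omega⟩) = f (a', (⟨0, by omega⟩ : Fin n)) := by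
          rw [hcs, hcs]; simp [h]
        exact congrArg Prod.fst (hinj h2)
      have hmn : m = n := by
        have h1 : m ≤ n := by simpa using Fintype.card_le_of_injective s hs
        have h2 : n ≤ m := by simpa using Fintype.card_le_of_injective c hc
        omega
      subst hmn
      set α : Fin m → Fin m := fun x => c (s x) with hαdef
      set β : Fin m → Fin m := fun y => s (c y) with hβdef
      have hα : Function.Injective α := fun a a' h => hs (hc h)
      have hβ : Function.Injective β := fun a a' h => hc (hs h)
      set x0 : Fin m := ⟨0, by omega⟩ with hx0
      set y0 : Fin m := ⟨0, by omega⟩ with hy0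
      have semiconj1 : Function.Semiconj c β α := fun y => rfl
      have semiconj2 : Function.Semiconj s α β := fun x => rfl
      have hq1 : minimalPeriod α (c y0) = minimalPeriod β y0 :=
        Rook.minimalPeriod_semiconj hc semiconj1 y0
      have hp1 : minimalPeriod β (s x0) = minimalPeriod α x0 :=
        Rook.minimalPeriod_semiconj hs semiconj2 x0
      have hiter : ∀ (j : ℕ) (p : Fin m × Fin m), f^[2*j] p = (α^[j] p.1, β^[j] p.2) := by
        intro j
        induction j with
        | zero => intro p; simp
        | succ j ih =>
          intro p
          have h1 : 2*(j+1) = 2*j + 2 := by ring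
          rw [h1, Function.iterate_add_apply]
          have h2 : f^[2] p = (α p.1, β p.2) := by
            have : f^[2] p = f (f p) := by
              rw [show (2:ℕ) = 1 + 1 from rfl, Function.iterate_add_apply]
              simp
            rw [this, hcs, hcs]
          rw [h2, ih]
          exact Prod.ext (Function.iterate_succ_apply α j p.1).symm
            (Function.iterate_succ_apply β j p.2).symm
      have hcover : ∀ w : Fin m × Fin m,
          (∃ j, (α^[j] x0, β^[j] y0) = w) ∨ (∃ j, (α^[j] (c y0), β^[j] (s x0)) = w) := by
        intro w
        obtain ⟨k, hk⟩ := hφ' (x0, y0) w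
        rcases Nat.even_or_odd k with hev | hod
        · left
          obtain ⟨r, hr⟩ := hev
          refine ⟨r, ?_⟩
          rw [← hk, show k = 2*r by omega, hiter]
        · right
          obtain ⟨r, hr⟩ := hod
          refine ⟨r, ?_⟩
          rw [← hk, hr, Function.iterate_add_apply, Function.iterate_one, hcs, hiter]
      have hm2' : m = 2 :=
        Rook.swap_case (by omega) α β hα hβ x0 y0 (c y0) (s x0) hq1 hp1 hcover
      exact Or.inr ⟨hm2', hm2'⟩
    · right; exact h22
  · rintro (hco | ⟨rfl, rfl⟩)
    · exact Rook.circulant_of_coprime hm hn hco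
    · exact Rook.circulant_22
end

section
/- If G is a circulant graph with an odd number of vertices, then K_{n,n} ⊗ G is circulant. -/
open SimpleGraph

set_option linter.unreachableTactic false
set_option linter.unusedTactic false


lemma fix_pow_mul {V : Type*} (e : Equiv.Perm V) (v₀ : V) (p q : ℕ)
    (h : (e ^ p) v₀ = v₀) : (e ^ (p * q)) v₀ = v₀ := by
  induction q with
  | zero => simp
  | succ q ih => rw [Nat.mul_succ, pow_add, Equiv.Perm.mul_apply, h, ih]

lemma pow_mod_reduce {V : Type*} (e : Equiv.Perm V) (v₀ : V) (p k : ℕ)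
    (h : (e ^ p) v₀ = v₀) : (e ^ k) v₀ = (e ^ (k % p)) v₀ := by
  conv_lhs => rw [← Nat.mod_add_div k p]
  rw [pow_add, Equiv.Perm.mul_apply, fix_pow_mul e v₀ p (k / p) h]

lemma card_le_of_fix {V : Type*} [Fintype V] (e : Equiv.Perm V) (v₀ : V)
    (hsurj : ∀ w, ∃ k, (e ^ k) v₀ = w) (p : ℕ) (hp : 0 < p)
    (h : (e ^ p) v₀ = v₀) : Fintype.card V ≤ p := by
  have : Function.Surjective (fun r : Fin p => (e ^ (r : ℕ)) v₀) := by
    intro w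
    obtain ⟨k, hk⟩ := hsurj w
    exact ⟨⟨k % p, Nat.mod_lt _ hp⟩, by simpa using (pow_mod_reduce e v₀ p k h).symm.trans hk⟩
  simpa using Fintype.card_le_of_surjective _ this

lemma pow_card_fix {V : Type*} [Fintype V] (e : Equiv.Perm V) (v₀ : V)
    (hsurj : ∀ w, ∃ k, (e ^ k) v₀ = w) : (e ^ Fintype.card V) v₀ = v₀ := by
  set m := Fintype.card V with hm
  have key : ∀ i j : ℕ, i < j → (e ^ i) v₀ = (e ^ j) v₀ → j ≤ m → (e ^ m) v₀ = v₀ := by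
    intro i j hij hfe hjm
    have hd : (e ^ (j - i)) v₀ = v₀ := by
      have : (e ^ i) ((e ^ (j - i)) v₀) = (e ^ i) v₀ := by
        rw [← Equiv.Perm.mul_apply, ← pow_add, Nat.add_sub_cancel' (le_of_lt hij), ← hfe]
      exact (e ^ i).injective this
    have h1 : m ≤ j - i := card_le_of_fix e v₀ hsurj _ (by omega) hd
    have h2 : j - i = m := by omega
    rwa [h2] at hd
  have : ¬ Function.Injective (fun r : Fin (m + 1) => (e ^ (r : ℕ)) v₀) := by
    intro hinj
    have := Fintype.card_le_of_injective _ hinj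
    simp [hm] at this
  rw [Function.not_injective_iff] at this
  obtain ⟨i, j, hfe, hne⟩ := this
  rcases Nat.lt_or_ge (i : ℕ) (j : ℕ) with h | h
  · exact key i j h hfe (Nat.lt_succ_iff.mp j.isLt)
  · have h' : (j : ℕ) < i := by
      rcases Nat.lt_or_ge (j : ℕ) (i : ℕ) with h2 | h2
      · exact h2
      · exact absurd (Fin.ext (le_antisymm h2 h)) hne
    exact key j i h' hfe.symm (Nat.lt_succ_iff.mp i.isLt)

lemma pow_eq_iff_mod {V : Type*} [Fintype V] (e : Equiv.Perm V) (v₀ : V)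
    (hsurj : ∀ w, ∃ k, (e ^ k) v₀ = w) (k l : ℕ) :
    (e ^ k) v₀ = (e ^ l) v₀ ↔ k ≡ l [MOD Fintype.card V] := by
  set m := Fintype.card V with hm
  have hmfix := pow_card_fix e v₀ hsurj
  have hred : ∀ k : ℕ, (e ^ k) v₀ = (e ^ (k % m)) v₀ := fun k => pow_mod_reduce e v₀ m k hmfix
  constructor
  · intro h
    have h' : (e ^ (k % m)) v₀ = (e ^ (l % m)) v₀ := by rw [← hred, ← hred, h]
    by_contra hne
    unfold Nat.ModEq at hne
    -- wlog via key
    have key : ∀ a b : ℕ, a < b → b < m → (e ^ a) v₀ = (e ^ b) v₀ → False := by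
      intro a b hab hbm hfe
      have hd : (e ^ (b - a)) v₀ = v₀ := by
        have : (e ^ a) ((e ^ (b - a)) v₀) = (e ^ a) v₀ := by
          rw [← Equiv.Perm.mul_apply, ← pow_add, Nat.add_sub_cancel' (le_of_lt hab), ← hfe]
        exact (e ^ a).injective this
      have := card_le_of_fix e v₀ hsurj _ (by omega) hd
      omega
    have hmpos : 0 < m := by
      rw [hm]; exact Fintype.card_pos_iff.mpr ⟨v₀⟩
    rcases Nat.lt_or_ge (k % m) (l % m) with h1 | h1
    · exact key _ _ h1 (Nat.mod_lt _ hmpos) h'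
    · have h2 : l % m < k % m := by omega
      exact key _ _ h2 (Nat.mod_lt _ hmpos) h'.symm
  · intro h
    rw [hred k, hred l, h]


section Theta

variable {V : Type*} [Fintype V]

def theta (n : ℕ) (e : Equiv.Perm V) (v₀ : V)
    [NeZero (2 * Fintype.card V * n)] (a : ZMod (2 * Fintype.card V * n)) :
    (Fin n ⊕ Fin n) × V :=
  ((if a.val % 2 = 0 then Sum.inl else Sum.inr)
      (⟨a.val / (2 * Fintype.card V), by
        have h1 := ZMod.val_lt a
        have h3 := NeZero.pos (2 * Fintype.card V * n)
        have h2 : 0 < 2 * Fintype.card V := by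
          rcases Nat.eq_zero_or_pos (2 * Fintype.card V) with h | h
          · rw [h, zero_mul] at h3; omega
          · exact h
        rw [Nat.div_lt_iff_lt_mul h2]
        calc a.val < 2 * Fintype.card V * n := h1
          _ = n * (2 * Fintype.card V) := by ring⟩ : Fin n), (e ^ a.val) v₀)

lemma theta_injective (n : ℕ) (e : Equiv.Perm V) (v₀ : V)
    [NeZero (2 * Fintype.card V * n)] (hodd : Odd (Fintype.card V))
    (hsurj : ∀ w, ∃ k, (e ^ k) v₀ = w) :
    Function.Injective (theta n e v₀) := by
  set m := Fintype.card V with hm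
  intro a b h
  rw [theta, theta, Prod.mk.injEq] at h
  obtain ⟨h1, h2⟩ := h
  have hmm : a.val ≡ b.val [MOD m] := (pow_eq_iff_mod e v₀ hsurj _ _).mp h2
  have hpar : a.val % 2 = b.val % 2 ∧ a.val / (2 * m) = b.val / (2 * m) := by
    split_ifs at h1 with ha hb hb <;>
      first
        | exact ⟨by omega, congrArg Fin.val (Sum.inl.inj h1)⟩
        | exact ⟨by omega, congrArg Fin.val (Sum.inr.inj h1)⟩
        | exact absurd h1 (by simp)
  have h2m : a.val ≡ b.val [MOD 2 * m] := by
    have hc : Nat.Coprime 2 m := by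
      rw [Nat.coprime_two_left]
      exact hodd
    exact (Nat.modEq_and_modEq_iff_modEq_mul hc).mp ⟨hpar.1, hmm⟩
  have h2m' : a.val % (2 * m) = b.val % (2 * m) := h2m
  have hval : a.val = b.val := by
    calc a.val = 2 * m * (a.val / (2 * m)) + a.val % (2 * m) := (Nat.div_add_mod _ _).symm
      _ = 2 * m * (b.val / (2 * m)) + b.val % (2 * m) := by rw [hpar.2, h2m']
      _ = b.val := Nat.div_add_mod _ _
  exact ZMod.val_injective _ hval

lemma theta_bijective (n : ℕ) (e : Equiv.Perm V) (v₀ : V)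
    [NeZero (2 * Fintype.card V * n)] (hodd : Odd (Fintype.card V))
    (hsurj : ∀ w, ∃ k, (e ^ k) v₀ = w) :
    Function.Bijective (theta n e v₀) := by
  rw [Fintype.bijective_iff_injective_and_card]
  refine ⟨theta_injective n e v₀ hodd hsurj, ?_⟩
  simp [ZMod.card]
  ring

lemma theta_adj (n : ℕ) (G : SimpleGraph V) (e : Equiv.Perm V) (v₀ : V)
    [NeZero (2 * Fintype.card V * n)] (a b : ZMod (2 * Fintype.card V * n)) :
    ((completeBipartiteGraph (Fin n) (Fin n)).tensor G).Adj
        (theta n e v₀ a) (theta n e v₀ b)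
      ↔ ¬(a.val % 2 = b.val % 2) ∧ G.Adj ((e ^ a.val) v₀) ((e ^ b.val) v₀) := by
  have hunf : ∀ x y : (Fin n ⊕ Fin n) × V,
      ((completeBipartiteGraph (Fin n) (Fin n)).tensor G).Adj x y ↔
        ((x.1.isLeft ∧ y.1.isRight) ∨ (x.1.isRight ∧ y.1.isLeft)) ∧ G.Adj x.2 y.2 := by
    intro x y
    rfl
  rw [theta, theta, hunf]
  split_ifs with ha hb hb <;> simp [ha, hb] <;> omega

lemma theta_shift (n : ℕ) (G : SimpleGraph V) (φ : G ≃g G) (v₀ : V)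
    [NeZero (2 * Fintype.card V * n)] (h1N : 1 < 2 * Fintype.card V * n)
    (hsurj : ∀ w, ∃ k, (φ.toEquiv ^ k) v₀ = w)
    (a b : ZMod (2 * Fintype.card V * n)) :
    ((completeBipartiteGraph (Fin n) (Fin n)).tensor G).Adj
        (theta n φ.toEquiv v₀ (a + 1)) (theta n φ.toEquiv v₀ (b + 1))
      ↔ ((completeBipartiteGraph (Fin n) (Fin n)).tensor G).Adj
        (theta n φ.toEquiv v₀ a) (theta n φ.toEquiv v₀ b) := by
  set m := Fintype.card V with hm
  set N := 2 * m * n with hN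
  haveI : Fact (1 < N) := ⟨h1N⟩
  have hval : ∀ c : ZMod N, (c + 1).val = (c.val + 1) % N := by
    intro c
    rw [ZMod.val_add, ZMod.val_one]
  have hpar : ∀ c : ZMod N, (c + 1).val % 2 = (c.val + 1) % 2 := by
    intro c
    rw [hval, Nat.mod_mod_of_dvd _ ⟨m * n, by ring⟩]
  have hpow : ∀ c : ZMod N, (φ.toEquiv ^ (c + 1).val) v₀ = φ.toEquiv ((φ.toEquiv ^ c.val) v₀) := by
    intro c
    have hmod : (c + 1).val ≡ c.val + 1 [MOD m] := by
      rw [hval]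
      exact Nat.mod_mod_of_dvd _ ⟨2 * n, by ring⟩
    rw [(pow_eq_iff_mod φ.toEquiv v₀ hsurj _ _).mpr hmod, pow_succ',
      Equiv.Perm.mul_apply]
  rw [theta_adj, theta_adj, hpar, hpar, hpow, hpow]
  constructor
  · rintro ⟨hp, hadj⟩
    exact ⟨by omega, φ.map_rel_iff.mp hadj⟩
  · rintro ⟨hp, hadj⟩
    exact ⟨by omega, φ.map_rel_iff.mpr hadj⟩

end Theta

theorem stmt_16 {V : Type*} [Fintype V] (n : ℕ) (G : SimpleGraph V)
    (hodd : Odd (Fintype.card V)) (hG : G.IsCirculant) :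
    ((completeBipartiteGraph (Fin n) (Fin n)).tensor G).IsCirculant := by
  obtain ⟨φ, hφ⟩ := hG
  rcases Nat.eq_zero_or_pos n with hn | hn
  · subst hn
    refine ⟨Iso.refl, fun v w => ?_⟩
    obtain ⟨x | x, -⟩ := v <;> exact x.elim0
  · set m := Fintype.card V with hm
    have hmpos : 0 < m := hodd.pos
    have h1N : 1 < 2 * m * n := by
      calc 1 < 2 * 1 * 1 := by norm_num
        _ ≤ 2 * m * n := by
          apply Nat.mul_le_mul
          · exact Nat.mul_le_mul_left 2 hmpos
          · exact hn
    haveI : NeZero (2 * m * n) := ⟨by omega⟩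
    obtain ⟨v₀⟩ : Nonempty V := Fintype.card_pos_iff.mp hmpos
    have hsurj : ∀ w, ∃ k, (φ.toEquiv ^ k) v₀ = w := fun w => hφ v₀ w
    set θe : ZMod (2 * m * n) ≃ ((Fin n ⊕ Fin n) × V) :=
      Equiv.ofBijective _ (theta_bijective n φ.toEquiv v₀ hodd hsurj) with hθe
    have hθapp : ∀ a, θe a = theta n φ.toEquiv v₀ a := fun a => rfl
    set E : Equiv.Perm ((Fin n ⊕ Fin n) × V) :=
      θe.symm.trans ((Equiv.addRight (1 : ZMod (2 * m * n))).trans θe) with hE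
    have hEapp : ∀ x, E x = θe (θe.symm x + 1) := fun x => rfl
    refine ⟨⟨E, @fun x y => ?_⟩, ?_⟩
    · rw [hEapp, hEapp]
      conv_rhs => rw [← θe.apply_symm_apply x, ← θe.apply_symm_apply y]
      rw [hθapp, hθapp, hθapp, hθapp]
      exact theta_shift n G φ v₀ h1N hsurj _ _
    · have hiter : ∀ (k : ℕ) (x), (E ^ k) x = θe (θe.symm x + (k : ZMod (2 * m * n))) := by
        intro k
        induction k with
        | zero => intro x; simp
        | succ k ih =>
            intro x
            have h1 : (E ^ (k + 1)) x = (E ^ k) (E x) := by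
              rw [pow_succ, Equiv.Perm.mul_apply]
            rw [h1, ih, hEapp, Equiv.symm_apply_apply]
            congr 1
            push_cast
            ring
      intro v w
      refine ⟨(θe.symm w - θe.symm v).val, ?_⟩
      have hkey : (θe.symm v + (((θe.symm w - θe.symm v).val : ℕ) : ZMod (2 * m * n)))
          = θe.symm w := by
        rw [ZMod.natCast_val, ZMod.cast_id]
        ring
      show (E ^ _) v = w
      rw [hiter, hkey, Equiv.apply_symm_apply]
end
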